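/- For all real numbers x and d, and all b in [-1/2, 1/2], it holds that |log(1 + ((1+b)x + d)^2) - log(1 + x^2)| ≤ 4|b| + |d|. -/

import Mathlib

/-- The function `t ↦ log (1 + t^2)` is 1-Lipschitz. -/
lemma log_one_add_sq_lipschitz (a c : ℝ) :
    |Real.log (1 + a ^ 2) - Real.log (1 + c ^ 2)| ≤ |a - c| := by
  have key : ∀ t : ℝ, HasDerivAt (fun t : ℝ => Real.log (1 + t ^ 2))
      (2 * t / (1 + t ^ 2)) t := by
    intro t
    have h1 : HasDerivAt (fun t : ℝ => 1 + t ^ 2) (2 * t) t := by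
      simpa using (hasDerivAt_pow 2 t).const_add 1
    have hne : (1 : ℝ) + t ^ 2 ≠ 0 := by positivity
    simpa using h1.log hne
  have hbound : ∀ t : ℝ, ‖2 * t / (1 + t ^ 2)‖ ≤ 1 := by
    intro t
    rw [Real.norm_eq_abs, abs_div, abs_of_pos (by positivity : (0:ℝ) < 1 + t ^ 2),
      div_le_one (by positivity)]
    have : |2 * t| = 2 * |t| := by rw [abs_mul]; norm_num
    rw [this]
    nlinarith [sq_nonneg (|t| - 1), sq_abs t]
  have := Convex.norm_image_sub_le_of_norm_hasDerivWithin_le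
    (f := fun t : ℝ => Real.log (1 + t ^ 2)) (f' := fun t => 2 * t / (1 + t ^ 2))
    (fun t _ => (key t).hasDerivWithinAt) (fun t _ => hbound t) convex_univ
    (Set.mem_univ c) (Set.mem_univ a)
  simpa [Real.norm_eq_abs] using this

lemma abs_log_one_add_le (b : ℝ) (hb : b ∈ Set.Icc (-(1/2) : ℝ) (1/2)) :
    |Real.log (1 + b)| ≤ 2 * |b| := by
  obtain ⟨hb1, hb2⟩ := hb
  have hpos : (0:ℝ) < 1 + b := by linarith
  rcases le_or_gt 0 b with h | h
  · have hub : Real.log (1 + b) ≤ b := by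
      have := Real.log_le_sub_one_of_pos hpos
      linarith
    have hlb : 0 ≤ Real.log (1 + b) := Real.log_nonneg (by linarith)
    rw [abs_of_nonneg hlb, abs_of_nonneg h]; linarith
  · have hinv : (0:ℝ) < (1 + b)⁻¹ := by positivity
    have h2 := Real.log_le_sub_one_of_pos hinv
    rw [Real.log_inv] at h2
    -- log (1+b) ≥ 1 - (1+b)⁻¹ = b/(1+b) ≥ 2b
    have hfrac : (1:ℝ) - (1 + b)⁻¹ = b / (1 + b) := by
      field_simp; ring
    have hlb : 2 * b ≤ Real.log (1 + b) := by
      have : b / (1 + b) ≥ 2 * b := by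
        rw [ge_iff_le, le_div_iff₀ hpos]
        nlinarith
      nlinarith [hfrac, h2]
    have hub : Real.log (1 + b) ≤ 0 := Real.log_nonpos (by linarith) (by linarith)
    rw [abs_of_nonpos hub, abs_of_neg h]; linarith

theorem log_affine_perturbation (x d b : ℝ) (hb : b ∈ Set.Icc (-(1/2) : ℝ) (1/2)) :
    |Real.log (1 + ((1 + b) * x + d) ^ 2) - Real.log (1 + x ^ 2)| ≤ 4 * |b| + |d| := by
  obtain ⟨hb1, hb2⟩ := hb
  set y : ℝ := (1 + b) * x
  have h1 : |Real.log (1 + (y + d) ^ 2) - Real.log (1 + y ^ 2)| ≤ |d| := by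
    simpa using log_one_add_sq_lipschitz (y + d) y
  have hpos : (0:ℝ) < 1 + b := by linarith
  have hw : (0:ℝ) < 1 + x ^ 2 := by positivity
  have hv : (0:ℝ) < 1 + y ^ 2 := by positivity
  have hy2 : y ^ 2 = (1 + b) ^ 2 * x ^ 2 := by ring
  have hL := abs_log_one_add_le b ⟨hb1, hb2⟩
  have h2 : |Real.log (1 + y ^ 2) - Real.log (1 + x ^ 2)| ≤ 4 * |b| := by
    have hlog2 : Real.log ((1 + b) ^ 2) = 2 * Real.log (1 + b) := by
      rw [Real.log_pow]; ring
    rcases le_or_gt 0 b with h | h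
    · -- 1 ≤ (1+b)^2 so w ≤ v ≤ (1+b)^2 * w
      have hlow : 1 + x ^ 2 ≤ 1 + y ^ 2 := by
        nlinarith [hy2, mul_nonneg h (sq_nonneg x), sq_nonneg (b * x)]
      have hhigh : 1 + y ^ 2 ≤ (1 + b) ^ 2 * (1 + x ^ 2) := by
        nlinarith [hy2, mul_nonneg h (sq_nonneg x), sq_nonneg (b * x)]
      have hA : Real.log (1 + x ^ 2) ≤ Real.log (1 + y ^ 2) := Real.log_le_log hw hlow
      have hB : Real.log (1 + y ^ 2) ≤ Real.log ((1 + b) ^ 2 * (1 + x ^ 2)) :=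
        Real.log_le_log hv hhigh
      rw [Real.log_mul (by positivity) (by positivity), hlog2] at hB
      rw [abs_of_nonneg (by linarith)]
      have : Real.log (1 + b) ≤ |Real.log (1 + b)| := le_abs_self _
      linarith
    · -- (1+b)^2 ≤ 1 so (1+b)^2 * w ≤ v ≤ w
      have hkey : (0:ℝ) ≤ (-b) * (2 + b) * x ^ 2 :=
        mul_nonneg (mul_nonneg (by linarith) (by linarith)) (sq_nonneg x)
      have hlow : (1 + b) ^ 2 * (1 + x ^ 2) ≤ 1 + y ^ 2 := by nlinarith [hy2, hkey]
      have hhigh : 1 + y ^ 2 ≤ 1 + x ^ 2 := by nlinarith [hy2, hkey]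
      have hA : Real.log (1 + y ^ 2) ≤ Real.log (1 + x ^ 2) := Real.log_le_log hv hhigh
      have hB : Real.log ((1 + b) ^ 2 * (1 + x ^ 2)) ≤ Real.log (1 + y ^ 2) :=
        Real.log_le_log (by positivity) hlow
      rw [Real.log_mul (by positivity) (by positivity), hlog2] at hB
      rw [abs_of_nonpos (by linarith)]
      have : -|Real.log (1 + b)| ≤ Real.log (1 + b) := neg_abs_le _
      linarith
  calc |Real.log (1 + (y + d) ^ 2) - Real.log (1 + x ^ 2)|
      ≤ |Real.log (1 + (y + d) ^ 2) - Real.log (1 + y ^ 2)| +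
        |Real.log (1 + y ^ 2) - Real.log (1 + x ^ 2)| := abs_sub_le _ _ _
    _ ≤ |d| + 4 * |b| := add_le_add h1 h2
    _ = 4 * |b| + |d| := by ring
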